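/- For θ ∈ (0, π/4] and c ∈ (0,1), the largest modulus ρ(θ,c) among the roots of the quadratic ρ² - (c·cos 2θ + 1)ρ + c·cos²θ = 0 equals √c·cos θ if c ≥ 1/(cos θ + sin θ)², and equals (1/2)(c·cos 2θ + 1 + √(c²cos²2θ - 2c + 1)) if c ≤ 1/(cos θ + sin θ)²; moreover ρ(θ,c) is monotonically decreasing in θ on [0, π/4]. -/

import Mathlib

open Real

/-- The asymptotic rate `ρ(θ,c)` of regularized Douglas–Rachford. -/
noncomputable def rateDR (θ c : ℝ) : ℝ :=
  if 1 / (Real.cos θ + Real.sin θ) ^ 2 ≤ c then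
    Real.sqrt c * Real.cos θ
  else
    (c * Real.cos (2 * θ) + 1 + Real.sqrt (c ^ 2 * Real.cos (2 * θ) ^ 2 - 2 * c + 1)) / 2

private lemma cond_iff' (t c : ℝ) (ht0 : 0 ≤ t) (ht4 : t ≤ π/4) (hc0 : 0 < c) (hc1 : c < 1) :
    (1 / (Real.cos t + Real.sin t) ^ 2 ≤ c) ↔
    c ^ 2 * Real.cos (2*t) ^ 2 - 2*c + 1 ≤ 0 := by
  have hpi := Real.pi_pos
  have hs : 0 ≤ Real.sin (2*t) :=
    Real.sin_nonneg_of_nonneg_of_le_pi (by linarith) (by linarith)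
  have hsum : (Real.cos t + Real.sin t)^2 = 1 + Real.sin (2*t) := by
    rw [Real.sin_two_mul]
    linear_combination Real.sin_sq_add_cos_sq t
  have h2 : Real.sin (2*t)^2 + Real.cos (2*t)^2 = 1 := Real.sin_sq_add_cos_sq (2*t)
  rw [hsum, div_le_iff₀ (by positivity)]
  constructor
  · intro h
    nlinarith [sq_nonneg (c * Real.sin (2*t) - (1 - c))]
  · intro h
    nlinarith [sq_nonneg (c * Real.sin (2*t) + (1 - c)), mul_nonneg hc0.le hs]

private lemma root_iff' (b p d : ℝ) (hd : b^2 - 4*p = d) (z : ℂ) :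
    z^2 - (b:ℂ)*z + (p:ℂ) = 0 ↔ (2*z - b)^2 = (d:ℂ) := by
  have hd' : (d:ℂ) = (b:ℂ)^2 - 4*(p:ℂ) := by push_cast [← hd]; ring
  rw [hd']
  constructor <;> intro h
  · linear_combination 4*h
  · linear_combination h/4

private lemma sq_real_nonpos' (w : ℂ) (d : ℝ) (hd : d ≤ 0) (h : w^2 = (d:ℂ)) :
    w.re = 0 ∧ w.im^2 = -d := by
  have h1 : w.re^2 - w.im^2 = d := by
    have := congrArg Complex.re h; simpa [pow_two, Complex.mul_re] using this
  have h2 : w.re * w.im + w.im * w.re = 0 := by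
    have := congrArg Complex.im h; simpa [pow_two, Complex.mul_im] using this
  rcases mul_eq_zero.mp (by linarith : w.re * w.im = 0) with h3 | h3
  · exact ⟨h3, by nlinarith⟩
  · have : w.re = 0 := by nlinarith [sq_nonneg w.re]
    exact ⟨this, by nlinarith⟩

private lemma sq_real_pos' (w : ℂ) (d : ℝ) (hd : 0 < d) (h : w^2 = (d:ℂ)) :
    w.im = 0 ∧ w.re^2 = d := by
  have h1 : w.re^2 - w.im^2 = d := by
    have := congrArg Complex.re h; simpa [pow_two, Complex.mul_re] using this
  have h2 : w.re * w.im + w.im * w.re = 0 := by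
    have := congrArg Complex.im h; simpa [pow_two, Complex.mul_im] using this
  rcases mul_eq_zero.mp (by linarith : w.re * w.im = 0) with h3 | h3
  · have : w.im = 0 := by nlinarith [sq_nonneg w.im]
    exact ⟨this, by nlinarith⟩
  · exact ⟨h3, by nlinarith⟩

private lemma rateDR_of_le {t c : ℝ} (h : 1 / (Real.cos t + Real.sin t) ^ 2 ≤ c) :
    rateDR t c = Real.sqrt c * Real.cos t := by rw [rateDR, if_pos h]

private lemma rateDR_of_gt {t c : ℝ} (h : ¬ 1 / (Real.cos t + Real.sin t) ^ 2 ≤ c) :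
    rateDR t c =
      (c * Real.cos (2 * t) + 1 + Real.sqrt (c ^ 2 * Real.cos (2 * t) ^ 2 - 2 * c + 1)) / 2 := by
  rw [rateDR, if_neg h]

/-- For `θ ∈ (0, π/4]` and `c ∈ (0,1)`, `ρ(θ,c)` is the largest modulus among the
(complex) roots of `ρ² - (c·cos 2θ + 1)ρ + c·cos²θ = 0`, and `ρ(·,c)` is
monotonically decreasing on `[0, π/4]`. -/
theorem stmt16 (θ c : ℝ) (hθ : θ ∈ Set.Ioc 0 (π / 4)) (hc : c ∈ Set.Ioo (0:ℝ) 1) :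
    IsGreatest {r : ℝ | ∃ z : ℂ,
        z ^ 2 - (↑(c * Real.cos (2 * θ) + 1)) * z + (↑(c * Real.cos θ ^ 2)) = 0 ∧
        r = ‖z‖}
      (rateDR θ c) ∧
    AntitoneOn (fun t => rateDR t c) (Set.Icc 0 (π / 4)) := by
  obtain ⟨hθ0, hθ4⟩ := hθ
  obtain ⟨hc0, hc1⟩ := hc
  have hpi := Real.pi_pos
  constructor
  · -- IsGreatest
    set b : ℝ := c * Real.cos (2 * θ) + 1 with hb_def
    set p : ℝ := c * Real.cos θ ^ 2 with hp_def
    set d : ℝ := c ^ 2 * Real.cos (2 * θ) ^ 2 - 2 * c + 1 with hd_def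
    have hbp : b ^ 2 - 4 * p = d := by
      rw [hb_def, hp_def, hd_def, Real.cos_two_mul]; ring
    have hcosθ : 0 < Real.cos θ := Real.cos_pos_of_mem_Ioo ⟨by linarith, by linarith⟩
    have hcos2 : 0 ≤ Real.cos (2 * θ) :=
      Real.cos_nonneg_of_mem_Icc ⟨by linarith, by linarith⟩
    have hbpos : 0 < b := by
      have : 0 ≤ c * Real.cos (2 * θ) := mul_nonneg hc0.le hcos2
      rw [hb_def]; linarith
    have hppos : 0 < p := by positivity
    have hcond := cond_iff' θ c hθ0.le hθ4 hc0 hc1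
    by_cases hd : d ≤ 0
    · -- Δ ≤ 0 : all roots have modulus √p = √c cos θ
      have hrate : rateDR θ c = Real.sqrt c * Real.cos θ := rateDR_of_le (hcond.mpr hd)
      have hsp : Real.sqrt c * Real.cos θ = Real.sqrt p := by
        rw [hp_def, Real.sqrt_mul hc0.le, Real.sqrt_sq hcosθ.le]
      have hs2 : Real.sqrt (-d) ^ 2 = -d := Real.sq_sqrt (by linarith)
      constructor
      · -- membership
        refine ⟨((b : ℂ) + (Real.sqrt (-d) : ℝ) * Complex.I) / 2, ?_, ?_⟩
        · rw [root_iff' b p d hbp]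
          have hs2' : ((Real.sqrt (-d) : ℝ) : ℂ) ^ 2 = ((-d : ℝ) : ℂ) := by
            exact_mod_cast congrArg (fun x : ℝ => (x : ℂ)) hs2
          push_cast at hs2' ⊢
          linear_combination (Complex.I ^ 2) * hs2' + (-(d : ℂ)) * Complex.I_sq
        · have hre : (((b : ℂ) + (Real.sqrt (-d) : ℝ) * Complex.I) / 2).re = b / 2 := by
            simp
          have him : (((b : ℂ) + (Real.sqrt (-d) : ℝ) * Complex.I) / 2).im =
              Real.sqrt (-d) / 2 := by simp
          rw [hrate, Complex.norm_def, Complex.normSq_apply, hre, him, hsp]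
          congr 1
          linear_combination -hs2/4 - hbp/4
      · -- upper bound
        rintro r ⟨z, hz, rfl⟩
        rw [root_iff' b p d hbp] at hz
        obtain ⟨hwre, hwim⟩ := sq_real_nonpos' _ d hd hz
        have hzre : 2 * z.re - b = 0 := by simpa using hwre
        have hzim : (2 * z.im) ^ 2 = -d := by simpa using hwim
        have hre' : z.re = b / 2 := by linarith
        have him' : z.im ^ 2 = -d / 4 := by nlinarith [hzim]
        have : ‖z‖ = Real.sqrt c * Real.cos θ := by
          rw [Complex.norm_def, Complex.normSq_apply, hsp]
          congr 1
          rw [hre']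
          linear_combination him' + hbp/4
        rw [hrate, this]
    · -- Δ > 0 : real roots, largest is (b + √d)/2
      push_neg at hd
      have hrate : rateDR θ c = (b + Real.sqrt d) / 2 :=
        rateDR_of_gt (fun h => absurd (hcond.mp h) (not_le.mpr hd))
      have hs2 : Real.sqrt d ^ 2 = d := Real.sq_sqrt hd.le
      have hsnn : 0 ≤ Real.sqrt d := Real.sqrt_nonneg d
      constructor
      · refine ⟨(((b + Real.sqrt d) / 2 : ℝ) : ℂ), ?_, ?_⟩
        · rw [root_iff' b p d hbp]
          have : (2 * (((b + Real.sqrt d) / 2 : ℝ) : ℂ) - (b : ℂ)) =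
              ((Real.sqrt d : ℝ) : ℂ) := by push_cast; ring
          rw [this]
          exact_mod_cast congrArg (fun x : ℝ => (x : ℂ)) hs2
        · rw [hrate, Complex.norm_real, Real.norm_eq_abs, abs_of_nonneg (by linarith)]
      · rintro r ⟨z, hz, rfl⟩
        rw [root_iff' b p d hbp] at hz
        obtain ⟨hwim, hwre⟩ := sq_real_pos' _ d hd hz
        have hzim : z.im = 0 := by
          have : 2 * z.im = 0 := by simpa using hwim
          linarith
        have hzre : (2 * z.re - b) ^ 2 = d := by simpa using hwre
        have habs : |2 * z.re - b| = Real.sqrt d := by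
          rw [← Real.sqrt_sq_eq_abs, hzre]
        have hb1 : 2 * z.re - b ≤ Real.sqrt d := by
          rcases abs_le.mp habs.le with ⟨_, h⟩; exact h
        have hb2 : -(Real.sqrt d) ≤ 2 * z.re - b := by
          rcases abs_le.mp habs.le with ⟨h, _⟩; exact h
        have : ‖z‖ = |z.re| := by
          rw [Complex.norm_def, Complex.normSq_apply, hzim]
          rw [show z.re * z.re + 0 * 0 = z.re * z.re by ring, Real.sqrt_mul_self_eq_abs]
        rw [hrate, this, abs_le]
        constructor <;> linarith
  · -- AntitoneOn
    intro t1 ht1 t2 ht2 h12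
    obtain ⟨h10, h14⟩ := ht1
    obtain ⟨h20, h24⟩ := ht2
    simp only
    have hcos1 : 0 < Real.cos t1 := Real.cos_pos_of_mem_Ioo ⟨by linarith, by linarith⟩
    have hcos2 : 0 < Real.cos t2 := Real.cos_pos_of_mem_Ioo ⟨by linarith, by linarith⟩
    have hc2nn1 : 0 ≤ Real.cos (2 * t1) :=
      Real.cos_nonneg_of_mem_Icc ⟨by linarith, by linarith⟩
    have hc2nn2 : 0 ≤ Real.cos (2 * t2) :=
      Real.cos_nonneg_of_mem_Icc ⟨by linarith, by linarith⟩
    have hu : Real.cos (2 * t2) ≤ Real.cos (2 * t1) :=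
      Real.cos_le_cos_of_nonneg_of_le_pi (by linarith) (by linarith) (by linarith)
    have hcosle : Real.cos t2 ≤ Real.cos t1 :=
      Real.cos_le_cos_of_nonneg_of_le_pi (by linarith) (by linarith) h12
    have hdle : c ^ 2 * Real.cos (2 * t2) ^ 2 - 2 * c + 1 ≤
        c ^ 2 * Real.cos (2 * t1) ^ 2 - 2 * c + 1 := by
      have hsq : Real.cos (2 * t2) ^ 2 ≤ Real.cos (2 * t1) ^ 2 :=
        pow_le_pow_left₀ hc2nn2 hu 2
      have := mul_le_mul_of_nonneg_left hsq (sq_nonneg c)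
      linarith
    have hcond1 := cond_iff' t1 c h10 h14 hc0 hc1
    have hcond2 := cond_iff' t2 c h20 h24 hc0 hc1
    by_cases hC1 : 1 / (Real.cos t1 + Real.sin t1) ^ 2 ≤ c
    · have hC2 : 1 / (Real.cos t2 + Real.sin t2) ^ 2 ≤ c :=
        hcond2.mpr (le_trans hdle (hcond1.mp hC1))
      rw [rateDR_of_le hC1, rateDR_of_le hC2]
      exact mul_le_mul_of_nonneg_left hcosle (Real.sqrt_nonneg c)
    · have hd1pos : 0 < c ^ 2 * Real.cos (2 * t1) ^ 2 - 2 * c + 1 :=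
        not_le.mp (fun h => hC1 (hcond1.mpr h))
      have hsqp : Real.sqrt c * Real.cos t1 ≤ (c * Real.cos (2 * t1) + 1) / 2 := by
        have h1 : Real.sqrt c * Real.cos t1 = Real.sqrt (c * Real.cos t1 ^ 2) := by
          rw [Real.sqrt_mul hc0.le, Real.sqrt_sq hcos1.le]
        have h2 : c * Real.cos t1 ^ 2 ≤ ((c * Real.cos (2 * t1) + 1) / 2) ^ 2 := by
          have hbp : (c * Real.cos (2 * t1) + 1) ^ 2 - 4 * (c * Real.cos t1 ^ 2) =
              c ^ 2 * Real.cos (2 * t1) ^ 2 - 2 * c + 1 := by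
            rw [Real.cos_two_mul]; ring
          nlinarith
        calc Real.sqrt c * Real.cos t1 = Real.sqrt (c * Real.cos t1 ^ 2) := h1
          _ ≤ Real.sqrt (((c * Real.cos (2 * t1) + 1) / 2) ^ 2) := Real.sqrt_le_sqrt h2
          _ = (c * Real.cos (2 * t1) + 1) / 2 := Real.sqrt_sq (by positivity)
      rw [rateDR_of_gt hC1]
      by_cases hC2 : 1 / (Real.cos t2 + Real.sin t2) ^ 2 ≤ c
      · rw [rateDR_of_le hC2]
        have h3 : Real.sqrt c * Real.cos t2 ≤ Real.sqrt c * Real.cos t1 :=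
          mul_le_mul_of_nonneg_left hcosle (Real.sqrt_nonneg c)
        have hsd : 0 ≤ Real.sqrt (c ^ 2 * Real.cos (2 * t1) ^ 2 - 2 * c + 1) :=
          Real.sqrt_nonneg _
        linarith
      · rw [rateDR_of_gt hC2]
        have hble : c * Real.cos (2 * t2) ≤ c * Real.cos (2 * t1) :=
          mul_le_mul_of_nonneg_left hu hc0.le
        have hsle : Real.sqrt (c ^ 2 * Real.cos (2 * t2) ^ 2 - 2 * c + 1) ≤
            Real.sqrt (c ^ 2 * Real.cos (2 * t1) ^ 2 - 2 * c + 1) :=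
          Real.sqrt_le_sqrt hdle
        linarith
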